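/- Let Φ: ℂ² → ℂ be Lebesgue-integrable and let κ ∈ SU(2). Then the twisted Fourier transform is equivariant for the right action of SU(2) on row vectors: for all (z₁, z₂) ∈ ℂ², (Φ ∘ ρ_κ)^^(z₁, z₂) = Φ^((z₁, z₂)·κ), where ρ_κ(u₁, u₂) = (u₁, u₂)·κ denotes right multiplication of the row vector (u₁, u₂) by the matrix κ, and ^ denotes the twisted Fourier transform. -/

import Mathlib

open MeasureTheory Real Complex

/-- The twisted Fourier transform on `ℂ²` (with respect to the self-dual Tate measure,
i.e. `4 ×` Lebesgue measure on `ℂ² ≅ ℝ⁴`):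
`Φ^(z₁,z₂) = 4 ∫ Φ(u₁,u₂) e^{-2πi(z₁u₂ - z₂u₁ + conj(z₁)conj(u₂) - conj(z₂)conj(u₁))} du`. -/
noncomputable def twistedFourier (Φ : ℂ × ℂ → ℂ) (z : ℂ × ℂ) : ℂ :=
  4 * ∫ u : ℂ × ℂ,
    Φ u * Complex.exp (-(2 * π * I) *
      (z.1 * u.2 - z.2 * u.1 +
        starRingEnd ℂ z.1 * starRingEnd ℂ u.2 - starRingEnd ℂ z.2 * starRingEnd ℂ u.1))

/-- Right multiplication of a row vector `(u₁, u₂) ∈ ℂ²` by a matrix `κ ∈ SU(2)`. -/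
def rowMulSU2 (κ : Matrix.specialUnitaryGroup (Fin 2) ℂ) (u : ℂ × ℂ) : ℂ × ℂ :=
  (u.1 * (κ : Matrix (Fin 2) (Fin 2) ℂ) 0 0 + u.2 * (κ : Matrix (Fin 2) (Fin 2) ℂ) 1 0,
   u.1 * (κ : Matrix (Fin 2) (Fin 2) ℂ) 0 1 + u.2 * (κ : Matrix (Fin 2) (Fin 2) ℂ) 1 1)


lemma su2_det (κ : Matrix.specialUnitaryGroup (Fin 2) ℂ) :
    (κ : Matrix (Fin 2) (Fin 2) ℂ) 0 0 * (κ : Matrix (Fin 2) (Fin 2) ℂ) 1 1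
      - (κ : Matrix (Fin 2) (Fin 2) ℂ) 0 1 * (κ : Matrix (Fin 2) (Fin 2) ℂ) 1 0 = 1 := by
  have h := (Matrix.mem_specialUnitaryGroup_iff.mp κ.prop).2
  rwa [Matrix.det_fin_two] at h

noncomputable def rowEquiv (κ : Matrix.specialUnitaryGroup (Fin 2) ℂ) : (ℂ × ℂ) ≃ₗ[ℂ] ℂ × ℂ where
  toFun := rowMulSU2 κ
  invFun v := (v.1 * (κ : Matrix (Fin 2) (Fin 2) ℂ) 1 1 - v.2 * (κ : Matrix (Fin 2) (Fin 2) ℂ) 1 0,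
    -(v.1 * (κ : Matrix (Fin 2) (Fin 2) ℂ) 0 1) + v.2 * (κ : Matrix (Fin 2) (Fin 2) ℂ) 0 0)
  map_add' u v := by simp [rowMulSU2, Prod.ext_iff]; constructor <;> ring
  map_smul' c u := by simp [rowMulSU2, Prod.ext_iff]; constructor <;> ring
  left_inv u := by
    have h := su2_det κ
    simp only [rowMulSU2, Prod.ext_iff]
    constructor
    · linear_combination u.1 * h
    · linear_combination u.2 * h
  right_inv v := by
    have h := su2_det κ
    simp only [rowMulSU2, Prod.ext_iff]
    constructor
    · linear_combination v.1 * h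
    · linear_combination v.2 * h

lemma det_real (κ : Matrix.specialUnitaryGroup (Fin 2) ℂ) :
    LinearMap.det (((rowEquiv κ).toLinearMap).restrictScalars ℝ) = 1 := by
  set a := (κ : Matrix (Fin 2) (Fin 2) ℂ) 0 0 with ha
  set bb := (κ : Matrix (Fin 2) (Fin 2) ℂ) 0 1 with hb
  set c := (κ : Matrix (Fin 2) (Fin 2) ℂ) 1 0 with hc
  set d := (κ : Matrix (Fin 2) (Fin 2) ℂ) 1 1 with hd
  rw [← LinearMap.det_toMatrix (Complex.basisOneI.prod Complex.basisOneI),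
      ← Matrix.det_reindex_self finSumFinEquiv]
  have hM : Matrix.reindex finSumFinEquiv finSumFinEquiv
      (LinearMap.toMatrix (Complex.basisOneI.prod Complex.basisOneI)
        (Complex.basisOneI.prod Complex.basisOneI)
        (((rowEquiv κ).toLinearMap).restrictScalars ℝ)) =
      !![a.re, -a.im, c.re, -c.im;
         a.im,  a.re, c.im,  c.re;
         bb.re, -bb.im, d.re, -d.im;
         bb.im,  bb.re, d.im,  d.re] := by
    have e0 : (finSumFinEquiv.symm (0 : Fin 4) : Fin 2 ⊕ Fin 2) = Sum.inl 0 := by decide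
    have e1 : (finSumFinEquiv.symm (1 : Fin 4) : Fin 2 ⊕ Fin 2) = Sum.inl 1 := by decide
    have e2 : (finSumFinEquiv.symm (2 : Fin 4) : Fin 2 ⊕ Fin 2) = Sum.inr 0 := by decide
    have e3 : (finSumFinEquiv.symm (3 : Fin 4) : Fin 2 ⊕ Fin 2) = Sum.inr 1 := by decide
    ext i j
    fin_cases i <;> fin_cases j <;>
      simp [Matrix.reindex_apply, LinearMap.toMatrix_apply, e0, e1, e2, e3,
        Module.Basis.prod_repr_inl, Module.Basis.prod_repr_inr, Module.Basis.prod_apply_inl_fst,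
        Module.Basis.prod_apply_inl_snd, Module.Basis.prod_apply_inr_fst, Module.Basis.prod_apply_inr_snd,
        rowEquiv, rowMulSU2, Complex.coe_basisOneI_repr, Complex.coe_basisOneI,
        ← ha, ← hb, ← hc, ← hd]
  rw [hM]
  have hdet := su2_det κ
  rw [Complex.ext_iff] at hdet
  obtain ⟨h1, h2⟩ := hdet
  simp only [Complex.sub_re, Complex.mul_re, Complex.sub_im, Complex.mul_im,
    Complex.one_re, Complex.one_im] at h1 h2
  simp [Matrix.det_succ_row_zero, Fin.sum_univ_succ, Fin.succAbove,
    Matrix.cons_val_zero, Matrix.cons_val_one, Matrix.head_cons,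
    show ((2:Fin 3).castSucc = (2:Fin 4)) from rfl]
  linear_combination (a.re * d.re - a.im * d.im - bb.re * c.re + bb.im * c.im + 1) * h1 +
    (a.re * d.im + a.im * d.re - bb.re * c.im - bb.im * c.re) * h2


lemma rowMulSU2_fun_eq (κ : Matrix.specialUnitaryGroup (Fin 2) ℂ) :
    ⇑(((rowEquiv κ).toLinearMap).restrictScalars ℝ) = rowMulSU2 κ := rfl

instance : (volume : Measure (ℂ × ℂ)).IsAddHaarMeasure := by
  rw [MeasureTheory.Measure.volume_eq_prod ℂ ℂ]; infer_instance

lemma rowMulSU2_measurePreserving (κ : Matrix.specialUnitaryGroup (Fin 2) ℂ) :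
    MeasurePreserving (rowMulSU2 κ) (volume : Measure (ℂ × ℂ)) volume := by
  have hdet : LinearMap.det (((rowEquiv κ).toLinearMap).restrictScalars ℝ) ≠ 0 := by
    rw [det_real]; norm_num
  have hcont : Continuous (rowMulSU2 κ) := by
    rw [← rowMulSU2_fun_eq κ]
    exact (((rowEquiv κ).toLinearMap).restrictScalars ℝ).continuous_of_finiteDimensional
  refine ⟨hcont.measurable, ?_⟩
  have h := Measure.map_linearMap_addHaar_eq_smul_addHaar (volume : Measure (ℂ × ℂ)) hdet
  rw [det_real, rowMulSU2_fun_eq] at h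
  simpa using h

lemma rowMulSU2_measurableEmbedding (κ : Matrix.specialUnitaryGroup (Fin 2) ℂ) :
    MeasurableEmbedding (rowMulSU2 κ) := by
  have h : ⇑(rowEquiv κ).toContinuousLinearEquiv.toHomeomorph.toMeasurableEquiv
      = rowMulSU2 κ := rfl
  rw [← h]
  exact (rowEquiv κ).toContinuousLinearEquiv.toHomeomorph.toMeasurableEquiv.measurableEmbedding

lemma phase (κ : Matrix.specialUnitaryGroup (Fin 2) ℂ) (z u : ℂ × ℂ) :
    (rowMulSU2 κ z).1 * (rowMulSU2 κ u).2 - (rowMulSU2 κ z).2 * (rowMulSU2 κ u).1 +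
      starRingEnd ℂ (rowMulSU2 κ z).1 * starRingEnd ℂ (rowMulSU2 κ u).2 -
      starRingEnd ℂ (rowMulSU2 κ z).2 * starRingEnd ℂ (rowMulSU2 κ u).1 =
    z.1 * u.2 - z.2 * u.1 + starRingEnd ℂ z.1 * starRingEnd ℂ u.2 -
      starRingEnd ℂ z.2 * starRingEnd ℂ u.1 := by
  have h := su2_det κ
  have hc := congrArg (starRingEnd ℂ) h
  simp only [map_sub, map_mul, map_one] at hc
  simp only [rowMulSU2, map_add, map_mul]
  linear_combination (z.1 * u.2 - z.2 * u.1) * h +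
    (starRingEnd ℂ z.1 * starRingEnd ℂ u.2 - starRingEnd ℂ z.2 * starRingEnd ℂ u.1) * hc

/-- `SU(2)`-equivariance of the twisted Fourier transform on `ℂ²`: for integrable `Φ` and
`κ ∈ SU(2)`, `(Φ ∘ ρ_κ)^(z) = Φ^(z·κ)` where `ρ_κ` is right multiplication by `κ`. -/
theorem twistedFourier_comp_rowMulSU2
    (Φ : ℂ × ℂ → ℂ) (hΦ : Integrable Φ (volume : Measure (ℂ × ℂ)))
    (κ : Matrix.specialUnitaryGroup (Fin 2) ℂ) (z : ℂ × ℂ) :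
    twistedFourier (fun u => Φ (rowMulSU2 κ u)) z = twistedFourier Φ (rowMulSU2 κ z) := by
  rw [twistedFourier, twistedFourier]
  congr 1
  rw [← (rowMulSU2_measurePreserving κ).integral_comp (rowMulSU2_measurableEmbedding κ)
    (fun v => Φ v * Complex.exp (-(2 * ↑π * I) *
      ((rowMulSU2 κ z).1 * v.2 - (rowMulSU2 κ z).2 * v.1 +
        starRingEnd ℂ (rowMulSU2 κ z).1 * starRingEnd ℂ v.2 -
        starRingEnd ℂ (rowMulSU2 κ z).2 * starRingEnd ℂ v.1)))]
  congr 1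
  funext u
  rw [phase κ z u]
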